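/- arXiv:1903.03874 — 4 statements merged into one kernel-verified Lean document; each statement's English description precedes it below -/
import Mathlib

section
/- Let R be a commutative ℚ-algebra, let g ∈ R[[p]] be a formal power series with constant term 1, let f ∈ R[[p]], and fix w, k ∈ ℚ. Define h(p) := Σ_{n≥0} (coefficient of p^n in g(p)^{w−kn}·f(p))·p^n ∈ R[[p]]. Then, substituting p = z·g(z)^k (a power series in z with zero constant term, so composition of formal power series is defined), one has h(z·g(z)^k) = g(z)^w·f(z) / (1 + k·z·g′(z)/g(z)), where the denominator 1 + k·z·g′(z)/g(z) has constant term 1 and hence is a unit in R[[z]]. -/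
open PowerSeries

noncomputable section
namespace Formal

variable {R : Type*} [CommRing R] [Algebra ℚ R]

/-- `log u := -∑_{k≥1} (1-u)^k / k`, the usual power series logarithm. The coefficientwise
truncation used here is valid whenever `constantCoeff u = 1`, since then `(1-u)^k` has
order `≥ k`. -/
def log (u : PowerSeries R) : PowerSeries R :=
  PowerSeries.mk fun N => ∑ k ∈ Finset.Icc 1 N, (-(k : ℚ)⁻¹) • coeff N ((1 - u) ^ k)

/-- `exp v := ∑_{k≥0} v^k / k!`; the coefficientwise truncation is valid whenever
`constantCoeff v = 0`, since then `v^k` has order `≥ k`. -/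
def expS (v : PowerSeries R) : PowerSeries R :=
  PowerSeries.mk fun N => ∑ k ∈ Finset.range (N + 1), ((k.factorial : ℚ)⁻¹) • coeff N (v ^ k)

/-- Rational power `u^α := exp (α · log u)`, well defined for `u` with constant term `1`. -/
def rpow (u : PowerSeries R) (α : ℚ) : PowerSeries R := expS (α • log u)

/-- Composition `h ∘ s = ∑_n (coeff n h) · s^n`; the coefficientwise truncation is valid
whenever `constantCoeff s = 0`, since then `s^n` has order `≥ n`. -/
def comp (h s : PowerSeries R) : PowerSeries R :=
  PowerSeries.mk fun N => ∑ k ∈ Finset.range (N + 1), coeff k h * coeff N (s ^ k)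


set_option linter.unusedSectionVars false

lemma coeff_pow_mul_lt {v : PowerSeries R} (hv : constantCoeff v = 0) (φ : PowerSeries R)
    {j m : ℕ} (h : j < m) : coeff j (v ^ m * φ) = 0 := by
  have h1 : (X : PowerSeries R) ^ m ∣ v ^ m * φ :=
    Dvd.dvd.mul_right (pow_dvd_pow_of_dvd (X_dvd_iff.2 hv) m) φ
  exact (X_pow_dvd_iff.1 h1) j h

lemma coeff_pow_lt {v : PowerSeries R} (hv : constantCoeff v = 0)
    {j m : ℕ} (h : j < m) : coeff j (v ^ m) = 0 := by
  simpa using coeff_pow_mul_lt hv 1 h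

lemma mul_natCast_eq_zero {x : R} {n : ℕ} (hn : n ≠ 0) (h : x * (n : R) = 0) : x = 0 := by
  have h2 : x * (algebraMap ℚ R (n : ℚ)) = 0 := by rw [map_natCast]; exact h
  have h3 := congrArg (· * algebraMap ℚ R ((n : ℚ)⁻¹)) h2
  simp only [zero_mul, mul_assoc, ← map_mul] at h3
  rw [mul_inv_cancel₀ (Nat.cast_ne_zero.2 hn : ((n : ℚ)) ≠ 0), map_one, mul_one] at h3
  exact h3

lemma derivative_expS {v : PowerSeries R} (hv : constantCoeff v = 0) :
    d⁄dX R (expS v) = d⁄dX R v * expS v := by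
  ext N
  rw [coeff_derivative, coeff_mul]
  simp only [expS, coeff_mk]
  rw [Finset.sum_mul]
  have lhs : ∀ k ∈ Finset.range (N + 2),
      ((k.factorial : ℚ)⁻¹ • coeff (N + 1) (v ^ k)) * ((N:R) + 1)
        = (k.factorial : ℚ)⁻¹ • (k • coeff N (v ^ (k-1) * d⁄dX R v)) := by
    intro k _
    rw [smul_mul_assoc]
    congr 1
    have hd := coeff_derivative (v ^ k) N
    rw [Derivation.leibniz_pow, smul_eq_mul, map_nsmul] at hd
    exact hd.symm
  rw [Finset.sum_congr rfl lhs, Finset.sum_range_succ']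
  simp only [zero_smul, smul_zero, add_zero, Nat.add_sub_cancel]
  have lhs2 : ∀ m ∈ Finset.range (N + 1),
      (((m+1).factorial : ℚ)⁻¹ • ((m+1) • coeff N (v ^ m * d⁄dX R v)))
        = (m.factorial : ℚ)⁻¹ • coeff N (v ^ m * d⁄dX R v) := by
    intro m _
    rw [← Nat.cast_smul_eq_nsmul ℚ (m+1), smul_smul]
    congr 1
    have hf : (m.factorial : ℚ) ≠ 0 := Nat.cast_ne_zero.2 m.factorial_ne_zero
    have hm1 : ((m:ℚ) + 1) ≠ 0 := by positivity
    rw [Nat.factorial_succ]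
    push_cast
    field_simp
  rw [Finset.sum_congr rfl lhs2]
  have rhs1 : ∀ p ∈ Finset.HasAntidiagonal.antidiagonal N,
      coeff p.1 (d⁄dX R v) * (∑ m ∈ Finset.range (p.2 + 1), (m.factorial : ℚ)⁻¹ • coeff p.2 (v ^ m))
        = ∑ m ∈ Finset.range (N+1), (m.factorial : ℚ)⁻¹ • (coeff p.1 (d⁄dX R v) * coeff p.2 (v ^ m)) := by
    intro p hp
    have hple : p.2 + 1 ≤ N + 1 := by
      have := Finset.HasAntidiagonal.antidiagonal.snd_le hp
      omega
    calc coeff p.1 (d⁄dX R v) * (∑ m ∈ Finset.range (p.2 + 1), (m.factorial : ℚ)⁻¹ • coeff p.2 (v ^ m))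
        = ∑ m ∈ Finset.range (p.2+1), (m.factorial:ℚ)⁻¹ • (coeff p.1 (d⁄dX R v) * coeff p.2 (v^m)) := by
          rw [Finset.mul_sum]
          exact Finset.sum_congr rfl fun m _ => (mul_smul_comm _ _ _)
      _ = ∑ m ∈ Finset.range (N+1), (m.factorial:ℚ)⁻¹ • (coeff p.1 (d⁄dX R v) * coeff p.2 (v^m)) :=
          Finset.sum_subset (Finset.range_subset_range.2 hple) (fun m _ hm => by
            rw [coeff_pow_lt hv (by simpa using hm), mul_zero, smul_zero])
  rw [Finset.sum_congr rfl rhs1, Finset.sum_comm]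
  refine Finset.sum_congr rfl fun m _ => ?_
  rw [← Finset.smul_sum, ← coeff_mul, mul_comm]

lemma coeff_derivative_log (u : PowerSeries R) (N : ℕ) :
    coeff N (d⁄dX R (log u))
      = -∑ m ∈ Finset.range (N+1), coeff N ((1-u)^m * d⁄dX R (1-u)) := by
  rw [coeff_derivative]
  simp only [log, coeff_mk]
  rw [Finset.sum_mul]
  have l1 : ∀ k ∈ Finset.Icc 1 (N+1),
      ((-(k:ℚ)⁻¹) • coeff (N+1) ((1-u)^k)) * ((N:R)+1)
        = -coeff N ((1-u)^(k-1) * d⁄dX R (1-u)) := by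
    intro k hk
    have hk1 : 1 ≤ k := (Finset.mem_Icc.1 hk).1
    rw [smul_mul_assoc]
    have hd := coeff_derivative ((1-u) ^ k) N
    rw [Derivation.leibniz_pow, smul_eq_mul, map_nsmul] at hd
    rw [← hd, ← Nat.cast_smul_eq_nsmul ℚ k, smul_smul, neg_mul,
      inv_mul_cancel₀ (by exact_mod_cast Nat.one_le_iff_ne_zero.1 hk1), neg_one_smul]
  rw [Finset.sum_congr rfl l1, ← Finset.Ico_add_one_right_eq_Icc, Finset.sum_Ico_eq_sum_range,
    ← Finset.sum_neg_distrib]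
  simp

lemma mul_derivative_log {u : PowerSeries R} (hu : constantCoeff u = 1) :
    u * d⁄dX R (log u) = d⁄dX R u := by
  have ht : constantCoeff (1 - u) = 0 := by simp [hu]
  ext N
  have h1 : u * d⁄dX R (log u) = d⁄dX R (log u) - (1 - u) * d⁄dX R (log u) := by ring
  rw [h1, map_sub, coeff_derivative_log]
  have h2 : coeff N ((1-u) * d⁄dX R (log u))
      = -∑ m ∈ Finset.range (N+1), coeff N ((1-u)^(m+1) * d⁄dX R (1-u)) := by
    rw [coeff_mul]
    have e1 : ∀ p ∈ Finset.HasAntidiagonal.antidiagonal N,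
        coeff p.1 (1-u) * coeff p.2 (d⁄dX R (log u))
          = -∑ m ∈ Finset.range (N+1),
              coeff p.1 (1-u) * coeff p.2 ((1-u)^m * d⁄dX R (1-u)) := by
      intro p hp
      rw [coeff_derivative_log, mul_neg, Finset.mul_sum]
      congr 1
      apply Finset.sum_subset
        (Finset.range_subset_range.2 (by have := Finset.HasAntidiagonal.antidiagonal.snd_le hp; omega))
      intro m _ hm
      rw [coeff_pow_mul_lt ht _ (by simpa using hm), mul_zero]
    rw [Finset.sum_congr rfl e1, Finset.sum_neg_distrib]
    congr 1
    rw [Finset.sum_comm]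
    refine Finset.sum_congr rfl fun m _ => ?_
    rw [← coeff_mul]
    congr 1
    ring
  rw [h2]
  have key : (∑ m ∈ Finset.range (N+1), coeff N ((1-u)^(m+1) * d⁄dX R (1-u)))
        + coeff N ((1-u)^0 * d⁄dX R (1-u))
      = (∑ m ∈ Finset.range (N+1), coeff N ((1-u)^m * d⁄dX R (1-u)))
        + coeff N ((1-u)^(N+1) * d⁄dX R (1-u)) := by
    rw [← Finset.sum_range_succ' (fun m => coeff N ((1-u)^m * d⁄dX R (1-u))) (N+1),
      ← Finset.sum_range_succ]
  have hz : coeff N ((1-u)^(N+1) * d⁄dX R (1-u)) = 0 :=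
    coeff_pow_mul_lt ht _ (Nat.lt_succ_self N)
  have hdu : coeff N ((1-u)^0 * d⁄dX R (1-u)) = -coeff N (d⁄dX R u) := by
    simp [map_sub]
  linear_combination key + hz - hdu

lemma constantCoeff_log (u : PowerSeries R) : constantCoeff (log u) = 0 := by
  rw [log, ← coeff_zero_eq_constantCoeff_apply, coeff_mk]
  simp

lemma constantCoeff_expS {v : PowerSeries R} (hv : constantCoeff v = 0) :
    constantCoeff (expS v) = 1 := by
  rw [expS, ← coeff_zero_eq_constantCoeff_apply, coeff_mk]
  simp

lemma constantCoeff_qsmul (α : ℚ) (φ : PowerSeries R) :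
    constantCoeff (α • φ) = α • constantCoeff φ := by
  rw [← coeff_zero_eq_constantCoeff_apply, ← coeff_zero_eq_constantCoeff_apply, coeff_smul]

lemma constantCoeff_rpow (g : PowerSeries R) (α : ℚ) :
    constantCoeff (rpow g α) = 1 :=
  constantCoeff_expS (by rw [constantCoeff_qsmul, constantCoeff_log, smul_zero])

lemma derivative_qsmul (α : ℚ) (φ : PowerSeries R) :
    d⁄dX R (α • φ) = α • d⁄dX R φ := by
  ext n
  rw [coeff_derivative, coeff_smul, coeff_smul, coeff_derivative, smul_mul_assoc]

lemma rpow_ode (g : PowerSeries R) (hg : constantCoeff g = 1) (α : ℚ) :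
    g * d⁄dX R (rpow g α) = α • (d⁄dX R g * rpow g α) := by
  rw [rpow, derivative_expS (by rw [constantCoeff_qsmul, constantCoeff_log, smul_zero]),
    derivative_qsmul]
  rw [smul_mul_assoc, mul_smul_comm, ← mul_assoc, mul_derivative_log hg]

lemma ode_unique {g y z : PowerSeries R} (hg : constantCoeff g = 1) (α : ℚ)
    (hy : g * d⁄dX R y = α • (d⁄dX R g * y))
    (hz : g * d⁄dX R z = α • (d⁄dX R g * z))
    (h0 : constantCoeff y = constantCoeff z) : y = z := by
  have hw : g * d⁄dX R (y - z) = α • (d⁄dX R g * (y - z)) := by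
    rw [map_sub, mul_sub, hy, hz, ← smul_sub, ← mul_sub]
  have main : ∀ N, coeff N (y - z) = 0 := by
    intro N
    induction N using Nat.strong_induction_on with
    | _ N ih =>
      match N with
      | 0 => simpa [sub_eq_zero] using h0
      | Nat.succ N =>
        have hc := congrArg (coeff N) hw
        rw [coeff_mul, coeff_smul, coeff_mul, Finset.smul_sum] at hc
        have hr : ∀ p ∈ Finset.HasAntidiagonal.antidiagonal N,
            α • (coeff p.1 (d⁄dX R g) * coeff p.2 (y - z)) = 0 := by
          intro p hp
          rw [ih p.2 (by have := Finset.HasAntidiagonal.antidiagonal.snd_le hp; omega), mul_zero, smul_zero]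
        rw [Finset.sum_congr rfl hr, Finset.sum_const_zero] at hc
        rw [Finset.sum_eq_single (0, N)] at hc
        · rw [coeff_zero_eq_constantCoeff_apply, hg, one_mul, coeff_derivative] at hc
          have hc2 : coeff (N + 1) (y - z) * ((N + 1 : ℕ) : R) = 0 := by push_cast; exact hc
          exact mul_natCast_eq_zero (Nat.succ_ne_zero N) hc2
        · intro p hp hne
          have hlt : p.2 < N := by
            have h := Finset.HasAntidiagonal.mem_antidiagonal.1 hp
            rcases Nat.lt_or_ge p.2 N with h' | h'
            · exact h'
            · exfalso; apply hne
              have h2 : p.2 = N := le_antisymm (by omega) h'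
              have h1 : p.1 = 0 := by omega
              exact Prod.ext h1 h2
          rw [coeff_derivative, ih (p.2 + 1) (by omega), zero_mul, mul_zero]
        · intro h
          exact absurd (Finset.HasAntidiagonal.mem_antidiagonal.2 (by simp)) h
  ext N
  have hN := main N
  rw [map_sub, sub_eq_zero] at hN
  exact hN

lemma rpow_zero (g : PowerSeries R) (hg : constantCoeff g = 1) : rpow g 0 = 1 := by
  apply ode_unique hg 0 (rpow_ode g hg 0)
  · simp
  · rw [constantCoeff_rpow, map_one]

lemma rpow_add (g : PowerSeries R) (hg : constantCoeff g = 1) (α β : ℚ) :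
    rpow g (α + β) = rpow g α * rpow g β := by
  apply ode_unique hg (α + β) (rpow_ode g hg (α + β))
  · rw [Derivation.leibniz, smul_eq_mul, smul_eq_mul]
    have e1 : rpow g α * (β • (d⁄dX R g * rpow g β))
        = β • (d⁄dX R g * (rpow g α * rpow g β)) := by
      rw [mul_smul_comm]; congr 1; ring
    have e2 : rpow g β * (α • (d⁄dX R g * rpow g α))
        = α • (d⁄dX R g * (rpow g α * rpow g β)) := by
      rw [mul_smul_comm]; congr 1; ring
    calc g * (rpow g α * d⁄dX R (rpow g β) + rpow g β * d⁄dX R (rpow g α))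
        = rpow g α * (g * d⁄dX R (rpow g β)) + rpow g β * (g * d⁄dX R (rpow g α)) := by ring
      _ = rpow g α * (β • (d⁄dX R g * rpow g β)) + rpow g β * (α • (d⁄dX R g * rpow g α)) := by
          rw [rpow_ode g hg α, rpow_ode g hg β]
      _ = (α + β) • (d⁄dX R g * (rpow g α * rpow g β)) := by rw [e1, e2, add_smul, add_comm]
  · rw [constantCoeff_rpow, map_mul, constantCoeff_rpow, constantCoeff_rpow, one_mul]

lemma rpow_natmul (g : PowerSeries R) (hg : constantCoeff g = 1) (α : ℚ) (n : ℕ) :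
    rpow g (α * n) = rpow g α ^ n := by
  induction n with
  | zero => simpa using rpow_zero g hg
  | succ n ih =>
      have h : α * ((n + 1 : ℕ) : ℚ) = α * n + α := by push_cast; ring
      rw [h, rpow_add g hg, ih, pow_succ]

lemma pow_mul_inv_pow {u : PowerSeries R} (huv : u * Ring.inverse u = 1) (a b : ℕ) :
    u ^ a * (Ring.inverse u) ^ (a + b) = (Ring.inverse u) ^ b := by
  rw [pow_add, ← mul_assoc, ← mul_pow, huv, one_pow, one_mul]

lemma coeff_delta {u : PowerSeries R} (hu : constantCoeff u = 1) (r : ℕ) :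
    coeff r ((u + X * d⁄dX R u) * (Ring.inverse u) ^ (r + 1)) = if r = 0 then 1 else 0 := by
  have huU : IsUnit u := isUnit_iff_constantCoeff.2 (by rw [hu]; exact isUnit_one)
  have huv : u * Ring.inverse u = 1 := Ring.mul_inverse_cancel u huU
  have hcv : constantCoeff (Ring.inverse u) = 1 := by
    have h := congrArg (constantCoeff) huv
    rw [map_mul, hu, one_mul, map_one] at h
    exact h
  rcases r with _ | s
  · rw [if_pos rfl, coeff_zero_eq_constantCoeff_apply, pow_one, map_mul, map_add, hu, map_mul,
      constantCoeff_X, zero_mul, add_zero, hcv, one_mul]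
  · set v := Ring.inverse u with hv_def
    have h0 : u * d⁄dX R v + v * d⁄dX R u = 0 := by
      have h := congrArg (d⁄dX R) huv
      simp only [Derivation.leibniz, smul_eq_mul, Derivation.map_one_eq_zero] at h
      exact h
    have hdv : d⁄dX R v = -(v ^ 2 * d⁄dX R u) := by
      linear_combination v * h0 - d⁄dX R v * huv
    have hdvr : d⁄dX R (v ^ (s + 1)) = -((s + 1) • (v ^ (s + 1 + 1) * d⁄dX R u)) := by
      rw [Derivation.leibniz_pow, smul_eq_mul, Nat.add_sub_cancel, hdv, mul_neg, smul_neg]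
      congr 2
      ring
    have e0 : (u + X * d⁄dX R u) * v ^ (s + 1 + 1)
        = v ^ (s + 1) + X * (d⁄dX R u * v ^ (s + 1 + 1)) := by
      have h1 : u * v ^ (s + 1 + 1) = v ^ (s + 1) := by
        linear_combination (v ^ (s + 1)) * huv
      linear_combination h1
    rw [if_neg (Nat.succ_ne_zero s), e0, map_add, coeff_succ_X_mul]
    have h4 : coeff s (d⁄dX R (v ^ (s + 1))) = coeff (s + 1) (v ^ (s + 1)) * ((s : R) + 1) :=
      coeff_derivative _ s
    rw [hdvr, map_neg, map_nsmul, nsmul_eq_mul] at h4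
    have hcomm : coeff s (v ^ (s + 1 + 1) * d⁄dX R u)
        = coeff s (d⁄dX R u * v ^ (s + 1 + 1)) := by rw [mul_comm]
    have h5 : (coeff (s + 1) (v ^ (s + 1)) + coeff s (d⁄dX R u * v ^ (s + 1 + 1)))
        * ((s + 1 : ℕ) : R) = 0 := by
      push_cast
      push_cast at h4
      linear_combination -h4 - ((s : R) + 1) * hcomm
    exact mul_natCast_eq_zero (Nat.succ_ne_zero s) h5

lemma phi_pow {u : PowerSeries R} (hu : constantCoeff u = 1) (N j : ℕ) :
    ∑ n ∈ Finset.range (N + 1),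
        coeff n ((X ^ j * u ^ j) * ((u + X * d⁄dX R u) * (Ring.inverse u) ^ (n + 1)))
          * coeff (N - n) (u ^ n)
      = coeff N ((X : PowerSeries R) ^ j * u ^ j) := by
  have huU : IsUnit u := isUnit_iff_constantCoeff.2 (by rw [hu]; exact isUnit_one)
  have huv : u * Ring.inverse u = 1 := Ring.mul_inverse_cancel u huU
  have hterm0 : ∀ n < j,
      coeff n ((X ^ j * u ^ j) * ((u + X * d⁄dX R u) * (Ring.inverse u) ^ (n + 1))) = 0 := by
    intro n hn
    have hdvd : (X : PowerSeries R) ^ j ∣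
        (X ^ j * u ^ j) * ((u + X * d⁄dX R u) * (Ring.inverse u) ^ (n + 1)) :=
      dvd_mul_of_dvd_left (dvd_mul_right _ _) _
    exact (X_pow_dvd_iff.1 hdvd) n hn
  have hterm : ∀ n, j ≤ n →
      coeff n ((X ^ j * u ^ j) * ((u + X * d⁄dX R u) * (Ring.inverse u) ^ (n + 1)))
        = if n = j then 1 else 0 := by
    intro n hjn
    obtain ⟨t, rfl⟩ : ∃ t, n = j + t := ⟨n - j, by omega⟩
    have e : (X ^ j * u ^ j) * ((u + X * d⁄dX R u) * (Ring.inverse u) ^ (j + t + 1))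
        = X ^ j * ((u + X * d⁄dX R u) * (Ring.inverse u) ^ (t + 1)) := by
      have h2 : u ^ j * (Ring.inverse u) ^ (j + (t + 1)) = (Ring.inverse u) ^ (t + 1) :=
        pow_mul_inv_pow huv j (t + 1)
      calc (X ^ j * u ^ j) * ((u + X * d⁄dX R u) * (Ring.inverse u) ^ (j + t + 1))
          = X ^ j * ((u + X * d⁄dX R u) * (u ^ j * (Ring.inverse u) ^ (j + (t + 1)))) := by
            ring
        _ = X ^ j * ((u + X * d⁄dX R u) * (Ring.inverse u) ^ (t + 1)) := by rw [h2]
    rw [e, show j + t = t + j from Nat.add_comm j t, coeff_X_pow_mul, coeff_delta hu t]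
    by_cases ht : t = 0
    · subst ht; simp
    · rw [if_neg ht, if_neg (by omega)]
  rcases le_or_gt j N with hjN | hjN
  · rw [Finset.sum_eq_single j]
    · rw [hterm j le_rfl, if_pos rfl, one_mul]
      conv_rhs => rw [show N = (N - j) + j by omega, coeff_X_pow_mul]
    · intro n hn hne
      rcases lt_or_ge n j with h | h
      · rw [hterm0 n h, zero_mul]
      · rw [hterm n h, if_neg hne, zero_mul]
    · intro hj
      exact absurd (Finset.mem_range.2 (by omega)) hj
  · rw [Finset.sum_eq_zero, eq_comm]
    · exact (X_pow_dvd_iff.1 (Dvd.dvd.mul_right (dvd_refl _) (u ^ j))) N hjN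
    · intro n hn
      rw [hterm0 n (by simp only [Finset.mem_range] at hn; omega), zero_mul]

lemma key_aux {u : PowerSeries R} (hu : constantCoeff u = 1) (N : ℕ) :
    ∀ (d : ℕ) (E : PowerSeries R), (X : PowerSeries R) ^ (N + 1 - d) ∣ E →
    ∑ n ∈ Finset.range (N + 1),
        coeff n (E * ((u + X * d⁄dX R u) * (Ring.inverse u) ^ (n + 1)))
          * coeff (N - n) (u ^ n)
      = coeff N E := by
  intro d
  induction d with
  | zero =>
    intro E hE
    rw [Nat.sub_zero] at hE
    rw [Finset.sum_eq_zero, eq_comm]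
    · exact (X_pow_dvd_iff.1 hE) N (Nat.lt_succ_self N)
    · intro n hn
      rw [(X_pow_dvd_iff.1 (Dvd.dvd.mul_right hE _)) n (Finset.mem_range.1 hn), zero_mul]
  | succ d ih =>
    intro E hE
    rcases le_or_gt (N + 1) d with hd | hd
    · exact ih E (by rwa [show N + 1 - (d + 1) = N + 1 - d by omega] at hE)
    · have hE' : (X : PowerSeries R) ^ (N - d) ∣ E := by
        rwa [show N + 1 - (d + 1) = N - d by omega] at hE
      set j := N - d with hj_def
      obtain ⟨E₀, rfl⟩ := hE'
      set c := constantCoeff E₀ with hc_def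
      have hsub : (X : PowerSeries R) ^ (N + 1 - d)
          ∣ X ^ j * E₀ - C c * (X ^ j * u ^ j) := by
        have h0 : constantCoeff (E₀ - C c * u ^ j) = 0 := by
          rw [map_sub, map_mul, map_pow, hu, one_pow, mul_one, constantCoeff_C]
          exact sub_self c
        obtain ⟨E₁, hE₁⟩ := X_dvd_iff.2 h0
        refine ⟨E₁, ?_⟩
        rw [show N + 1 - d = j + 1 by omega, pow_succ, mul_assoc, ← hE₁]
        ring
      have split : ∀ n,
          coeff n ((X ^ j * E₀) * ((u + X * d⁄dX R u) * (Ring.inverse u) ^ (n + 1)))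
            * coeff (N - n) (u ^ n)
          = coeff n ((X ^ j * E₀ - C c * (X ^ j * u ^ j))
              * ((u + X * d⁄dX R u) * (Ring.inverse u) ^ (n + 1))) * coeff (N - n) (u ^ n)
            + c * (coeff n ((X ^ j * u ^ j) * ((u + X * d⁄dX R u) * (Ring.inverse u) ^ (n + 1)))
              * coeff (N - n) (u ^ n)) := by
        intro n
        rw [sub_mul, map_sub, mul_assoc (C c), coeff_C_mul]
        ring
      rw [Finset.sum_congr rfl (fun n _ => split n), Finset.sum_add_distrib, ← Finset.mul_sum,
        ih _ hsub, phi_pow hu N j, map_sub, coeff_C_mul]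
      ring

/-- Let `R` be a commutative `ℚ`-algebra, `g ∈ R[[p]]` with constant term `1`,
`f ∈ R[[p]]`, and `w, k ∈ ℚ`. Set `h(p) := ∑_{n≥0} (coeff of p^n in g^{w-kn}·f) p^n`.
Substituting `p = z·g(z)^k` (a power series with zero constant term) one has
`h(z·g(z)^k) = g(z)^w·f(z) / (1 + k·z·g′(z)/g(z))`, where the denominator has constant
term `1` and hence is a unit (its inverse being `Ring.inverse`). -/
theorem statement0 (g f : PowerSeries R) (hg : constantCoeff g = 1) (w k : ℚ) :
    let h : PowerSeries R := PowerSeries.mk fun n => coeff n (rpow g (w - k * n) * f)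
    let D : PowerSeries R := 1 + k • (X * d⁄dX R g * Ring.inverse g)
    constantCoeff D = 1 ∧
      comp h (X * rpow g k) = rpow g w * f * Ring.inverse D := by
  show constantCoeff (1 + k • (X * d⁄dX R g * Ring.inverse g)) = 1 ∧
      comp (PowerSeries.mk fun n => coeff n (rpow g (w - k * n) * f)) (X * rpow g k)
        = rpow g w * f * Ring.inverse (1 + k • (X * d⁄dX R g * Ring.inverse g))
  set D : PowerSeries R := 1 + k • (X * d⁄dX R g * Ring.inverse g) with hD_def
  have hgU : IsUnit g := isUnit_iff_constantCoeff.2 (by rw [hg]; exact isUnit_one)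
  have hgg : g * Ring.inverse g = 1 := Ring.mul_inverse_cancel g hgU
  have hD1 : constantCoeff D = 1 := by
    rw [hD_def, map_add, map_one, constantCoeff_qsmul, map_mul, map_mul, constantCoeff_X,
      zero_mul, zero_mul, smul_zero, add_zero]
  refine ⟨hD1, ?_⟩
  set u := rpow g k with hu_def
  have hu : constantCoeff u = 1 := constantCoeff_rpow g k
  have huU : IsUnit u := isUnit_iff_constantCoeff.2 (by rw [hu]; exact isUnit_one)
  have huv : u * Ring.inverse u = 1 := Ring.mul_inverse_cancel u huU
  have hDU : IsUnit D := isUnit_iff_constantCoeff.2 (by rw [hD1]; exact isUnit_one)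
  have hDD : Ring.inverse D * D = 1 := Ring.inverse_mul_cancel D hDU
  have hdu : d⁄dX R u = k • (d⁄dX R g * u * Ring.inverse g) := by
    calc d⁄dX R u = g * d⁄dX R u * Ring.inverse g := by
          rw [mul_comm g, mul_assoc, hgg, mul_one]
      _ = k • (d⁄dX R g * u * Ring.inverse g) := by
          rw [hu_def, rpow_ode g hg k, smul_mul_assoc, ← smul_mul_assoc]
  have hW : D * u = u + X * d⁄dX R u := by
    rw [hD_def, hdu, add_mul, one_mul]
    congr 1
    rw [smul_mul_assoc, mul_smul_comm]
    congr 1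
    ring
  ext N
  rw [comp, coeff_mk]
  set E : PowerSeries R := rpow g (w - k * N) * f * u ^ N * Ring.inverse D with hE_def
  have e3 : rpow g w = rpow g (w - k * N) * u ^ N := by
    rw [hu_def, ← rpow_natmul g hg k N, ← rpow_add g hg]
    congr 1
    ring
  have hrw : rpow g w * f * Ring.inverse D = E := by
    rw [hE_def, e3]
    ring
  have hsummand : ∀ n, n ≤ N → rpow g (w - k * n) * f
      = E * ((u + X * d⁄dX R u) * (Ring.inverse u) ^ (n + 1)) := by
    intro n hn
    have e1 : rpow g (w - k * n) = rpow g (w - k * N) * u ^ (N - n) := by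
      rw [hu_def, ← rpow_natmul g hg k (N - n), ← rpow_add g hg]
      congr 1
      rw [Nat.cast_sub hn]
      ring
    have e2 : u ^ N * (Ring.inverse u) ^ n = u ^ (N - n) := by
      have hsplit : u ^ N = u ^ (N - n) * u ^ n := by
        rw [← pow_add]
        congr 1
        omega
      rw [hsplit, mul_assoc, ← mul_pow, huv, one_pow, mul_one]
    calc rpow g (w - k * n) * f = rpow g (w - k * N) * f * u ^ (N - n) := by rw [e1]; ring
      _ = rpow g (w - k * N) * f * (u ^ N * (Ring.inverse u) ^ n) := by rw [e2]
      _ = rpow g (w - k * N) * f * (u ^ N * (Ring.inverse u) ^ n) * (Ring.inverse D * D)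
          * (u * Ring.inverse u) := by rw [hDD, huv, mul_one, mul_one]
      _ = E * ((D * u) * (Ring.inverse u) ^ (n + 1)) := by rw [hE_def]; ring
      _ = E * ((u + X * d⁄dX R u) * (Ring.inverse u) ^ (n + 1)) := by rw [hW]
  rw [hrw, ← key_aux hu N (N + 1) E (by rw [Nat.sub_self, pow_zero]; exact one_dvd E)]
  refine Finset.sum_congr rfl fun n hn => ?_
  have hn' : n ≤ N := by
    have := Finset.mem_range.1 hn
    omega
  have hXu : coeff N ((X * u) ^ n) = coeff (N - n) (u ^ n) := by
    rw [mul_pow]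
    conv_lhs => rw [show N = (N - n) + n by omega]
    rw [coeff_X_pow_mul]
  rw [coeff_mk, hXu, hsummand n hn']

end Formal
end
end

section
/- Let R be a commutative ℚ-algebra, let g ∈ R[[p]] be a formal power series with constant term 1 and let f ∈ R[[p]]. Define h(p) := Σ_{n≥0} (coefficient of p^n in g(p)^{−n}·f(p))·p^n ∈ R[[p]]. Then, substituting p = z·g(z) (a power series in z with zero constant term, so composition of formal power series is defined), one has h(z·g(z)) = f(z) / (1 + z·g′(z)/g(z)), where 1 + z·g′(z)/g(z) has constant term 1 and hence is a unit in R[[z]]. -/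
open PowerSeries

noncomputable section
namespace Formal

variable {R : Type*} [CommRing R] [Algebra ℚ R]

private lemma nat_cancel {m : ℕ} (hm : m ≠ 0) {x : R} (h : (m : R) * x = 0) : x = 0 := by
  have hs : (m : ℚ) • x = 0 := by
    rw [Algebra.smul_def, map_natCast]; exact h
  have h2 : ((m : ℚ)⁻¹ * (m : ℚ)) • x = 0 := by rw [mul_smul, hs, smul_zero]
  rwa [inv_mul_cancel₀ (by exact_mod_cast hm), one_smul] at h2

private lemma key_lemma (g G : PowerSeries R) (hG : g * G = 1) (m : ℕ) (hm : m ≠ 0) :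
    coeff m (G ^ m * (1 + X * d⁄dX R g * G)) = 0 := by
  obtain ⟨n, rfl⟩ := Nat.exists_eq_succ_of_ne_zero hm
  have hdG : d⁄dX R G = -(d⁄dX R g * G ^ 2) := by
    have h0 : d⁄dX R (g * G) = 0 := by rw [hG]; simp
    rw [Derivation.leibniz, smul_eq_mul, smul_eq_mul] at h0
    linear_combination G * h0 - (d⁄dX R G) * hG
  have hpow : d⁄dX R (G ^ (n + 1)) = -((n + 1 : ℕ) • (d⁄dX R g * G ^ (n + 2))) := by
    rw [Derivation.leibniz_pow, hdG]
    simp only [smul_eq_mul, nsmul_eq_mul, Nat.add_sub_cancel]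
    ring
  have hre : G ^ (n + 1) * (1 + X * d⁄dX R g * G)
      = G ^ (n + 1) + X * (d⁄dX R g * G ^ (n + 2)) := by ring
  rw [hre, map_add, coeff_succ_X_mul]
  have hc : coeff n (d⁄dX R (G ^ (n + 1)))
      = coeff (n + 1) (G ^ (n + 1)) * (n + 1) := coeff_derivative _ _
  rw [hpow, map_neg, map_nsmul, nsmul_eq_mul] at hc
  apply nat_cancel (m := n + 1) (Nat.succ_ne_zero n)
  push_cast at hc ⊢
  linear_combination -hc

private lemma constCoeff_D (g G : PowerSeries R) :
    constantCoeff (1 + X * d⁄dX R g * G) = 1 := by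
  simp [constantCoeff_X]

private lemma hmap_fk (g G : PowerSeries R) (hG : g * G = 1) (k : ℕ) :
    (PowerSeries.mk fun n =>
        coeff n (G ^ n * (X ^ k * (g ^ k * (1 + X * d⁄dX R g * G)))))
      = (X : PowerSeries R) ^ k := by
  ext n
  rw [coeff_mk, coeff_X_pow]
  rcases lt_or_ge n k with hn | hn
  · rw [if_neg hn.ne]
    refine X_pow_dvd_iff.mp ⟨G ^ n * (g ^ k * (1 + X * d⁄dX R g * G)), by ring⟩ n hn
  · obtain ⟨m, rfl⟩ := Nat.exists_eq_add_of_le hn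
    have hre : G ^ (k + m) * (X ^ k * (g ^ k * (1 + X * d⁄dX R g * G)))
        = X ^ k * ((g * G) ^ k * (G ^ m * (1 + X * d⁄dX R g * G))) := by ring
    rw [hre, hG, one_pow, one_mul, add_comm k m, coeff_X_pow_mul]
    rcases Nat.eq_zero_or_pos m with rfl | hm
    · simp [constantCoeff_X, coeff_zero_eq_constantCoeff]
    · rw [key_lemma g G hG m hm.ne', if_neg (by omega)]

private lemma comp_X_pow (g : PowerSeries R) (k : ℕ) :
    comp ((X : PowerSeries R) ^ k) (X * g) = (X * g) ^ k := by
  ext N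
  rw [comp, coeff_mk]
  simp only [coeff_X_pow, ite_mul, one_mul, zero_mul]
  rw [Finset.sum_ite_eq' (Finset.range (N + 1)) k fun j => coeff N ((X * g) ^ j)]
  rcases le_or_gt k N with h | h
  · rw [if_pos (Finset.mem_range.mpr (by omega))]
  · rw [if_neg (by simp; omega)]
    refine (X_pow_dvd_iff.mp ⟨g ^ k, by rw [mul_pow]⟩ N h).symm

private lemma main_lemma (g G : PowerSeries R) (hg : constantCoeff g = 1)
    (hG : g * G = 1) (f : PowerSeries R) :
    comp (PowerSeries.mk fun n => coeff n (G ^ n * f)) (X * g)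
        * (1 + X * d⁄dX R g * G) = f := by
  set D : PowerSeries R := 1 + X * d⁄dX R g * G with hD
  set L : PowerSeries R → PowerSeries R :=
    fun f => comp (PowerSeries.mk fun n => coeff n (G ^ n * f)) (X * g) * D with hL
  -- linearity
  have L_lin : ∀ (a b : PowerSeries R) (c : R), L (a + c • b) = L a + c • L b := by
    intro a b c
    have hmk : (PowerSeries.mk fun n => coeff n (G ^ n * (a + c • b)))
        = (PowerSeries.mk fun n => coeff n (G ^ n * a))
          + c • PowerSeries.mk fun n => coeff n (G ^ n * b) := by
      ext n
      simp [mul_add, mul_smul_comm]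
    have hcomp : ∀ (h₁ h₂ : PowerSeries R) (c : R) (s : PowerSeries R),
        comp (h₁ + c • h₂) s = comp h₁ s + c • comp h₂ s := by
      intro h₁ h₂ c s
      ext N
      simp [comp, add_mul, Finset.sum_add_distrib, Finset.mul_sum, smul_mul_assoc,
        mul_assoc]
    rw [hL]
    simp only [hmk, hcomp]
    rw [add_mul, smul_mul_assoc]
  -- L fixes the basis elements
  have L_fk : ∀ k : ℕ, L (X ^ k * (g ^ k * D)) = X ^ k * (g ^ k * D) := by
    intro k
    rw [hL]
    simp only
    rw [hD, hmap_fk g G hG k, comp_X_pow g k, mul_pow]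
    ring
  -- coefficients of the basis elements
  have fk_coeff_lt : ∀ k j : ℕ, j < k → coeff j (X ^ k * (g ^ k * D)) = 0 := by
    intro k j hj
    exact X_pow_dvd_iff.mp ⟨g ^ k * D, rfl⟩ j hj
  have fk_coeff_eq : ∀ k : ℕ, coeff k (X ^ k * (g ^ k * D)) = 1 := by
    intro k
    have := coeff_X_pow_mul (g ^ k * D) k 0
    rw [zero_add] at this
    rw [this, coeff_zero_eq_constantCoeff, map_mul, map_pow, hg, one_pow, one_mul,
      hD, constCoeff_D]
  -- vanishing
  have L_van : ∀ (N : ℕ) (f : PowerSeries R), (∀ j, j ≤ N → coeff j f = 0) →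
      coeff N (L f) = 0 := by
    intro N f hf
    obtain ⟨w, rfl⟩ : (X : PowerSeries R) ^ (N + 1) ∣ f :=
      X_pow_dvd_iff.mpr fun m hm => hf m (Nat.lt_succ_iff.mp hm)
    have hcoe : ∀ j, j ≤ N →
        coeff j (PowerSeries.mk fun n => coeff n (G ^ n * (X ^ (N + 1) * w))) = 0 := by
      intro j hj
      rw [coeff_mk]
      exact (X_pow_dvd_iff (n := N + 1)).mp ⟨G ^ j * w, by ring⟩ j (by omega)
    have hcomp : ∀ i, i ≤ N →
        coeff i (comp (PowerSeries.mk fun n =>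
          coeff n (G ^ n * (X ^ (N + 1) * w))) (X * g)) = 0 := by
      intro i hi
      rw [comp, coeff_mk]
      refine Finset.sum_eq_zero fun k hk => ?_
      rw [hcoe k (by exact le_trans (Nat.lt_succ_iff.mp (Finset.mem_range.mp hk)) hi),
        zero_mul]
    rw [hL]
    simp only
    refine X_pow_dvd_iff.mp (dvd_mul_of_dvd_left
      (X_pow_dvd_iff.mpr fun m hm => hcomp m (Nat.lt_succ_iff.mp hm)) D) N (by omega)
  -- main induction
  have main : ∀ (N c : ℕ) (f : PowerSeries R),
      (∀ j, j + c < N + 1 → coeff j f = 0) → coeff N (L f) = coeff N f := by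
    intro N c
    induction c with
    | zero =>
      intro f hf
      rw [L_van N f fun j hj => hf j (by omega), hf N (by omega)]
    | succ c ih =>
      intro f hf
      rcases le_or_gt c N with hc | hc
      · obtain ⟨c0, f', hsplit, hcf'⟩ :
            ∃ (c0 : R) (f' : PowerSeries R),
              f = f' + c0 • (X ^ (N - c) * (g ^ (N - c) * D)) ∧
                ∀ j, j + c < N + 1 → coeff j f' = 0 := by
          refine ⟨coeff (N - c) f,
            f - coeff (N - c) f • (X ^ (N - c) * (g ^ (N - c) * D)), by ring, ?_⟩
          intro j hj
          have hjk : j ≤ N - c := by omega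
          rcases lt_or_eq_of_le hjk with hlt | rfl
          · rw [map_sub, coeff_smul, hf j (by omega), fk_coeff_lt (N - c) j hlt,
              smul_zero, sub_zero]
          · rw [map_sub, coeff_smul, fk_coeff_eq (N - c), smul_eq_mul, mul_one, sub_self]
        rw [hsplit, L_lin, map_add, map_add, coeff_smul, coeff_smul,
          L_fk (N - c), ih f' hcf']
      · exact ih f fun j hj => hf j (by omega)
  ext N
  exact main N (N + 1) f fun j hj => absurd hj (by omega)

/-- Let `R` be a commutative ring (e.g. a `ℚ`-algebra), `g ∈ R[[p]]` with
constant term `1` (hence a unit, with inverse `Ring.inverse g`, so that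
`g^{-n} = (Ring.inverse g)^n`), and `f ∈ R[[p]]`. Set
`h(p) := ∑_{n≥0} (coeff of p^n in g^{-n}·f) p^n`. Substituting `p = z·g(z)` one has
`h(z·g(z)) = f(z) / (1 + z·g′(z)/g(z))`, where the denominator has constant term `1`
and hence is a unit (with inverse `Ring.inverse`). -/
theorem statement1 (g f : PowerSeries R) (hg : constantCoeff g = 1) :
    let h : PowerSeries R := PowerSeries.mk fun n => coeff n ((Ring.inverse g) ^ n * f)
    let D : PowerSeries R := 1 + X * d⁄dX R g * Ring.inverse g
    constantCoeff D = 1 ∧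
      comp h (X * g) = f * Ring.inverse D := by
  intro h D
  have hDc : constantCoeff D = 1 := by
    simp [D, constantCoeff_X]
  refine ⟨hDc, ?_⟩
  have hgu : IsUnit g := isUnit_iff_constantCoeff.mpr (by rw [hg]; exact isUnit_one)
  have hG : g * Ring.inverse g = 1 := Ring.mul_inverse_cancel g hgu
  have hDu : IsUnit D := isUnit_iff_constantCoeff.mpr (by rw [hDc]; exact isUnit_one)
  have h1 : comp h (X * g) * D = f := main_lemma g (Ring.inverse g) hg hG f
  have hDinv : D * Ring.inverse D = 1 := Ring.mul_inverse_cancel D hDu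
  calc comp h (X * g) = comp h (X * g) * (D * Ring.inverse D) := by rw [hDinv, mul_one]
    _ = comp h (X * g) * D * Ring.inverse D := by ring
    _ = f * Ring.inverse D := by rw [h1]

end Formal
end
end

section
/- Formal Lagrange inversion: let R be a commutative ℚ-algebra, let a ∈ R[[x]] be a formal power series of order ≥ 2 (i.e. a ∈ x²·R[[x]]) and let f ∈ R[[x]]. There is a unique power series w ∈ R[[x]] with zero constant term satisfying w = x + a∘w, and the series Σ_{n≥0} (1/n!)·(d/dx)^n ( a(x)^n·f(x) ) converges x-adically (its n-th term has order ≥ n) to (f∘w) · (1 − (a′∘w))^{−1}, where 1 − (a′∘w) has constant term 1 and hence is a unit in R[[x]]. -/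
open PowerSeries

noncomputable section
namespace Formal

variable {R : Type*} [CommRing R] [Algebra ℚ R]

/-- The `n`-th term `(1/n!)·(d/dx)^n (a^n·f)` of the Lagrange inversion series. -/
def lagrangeTerm (a f : PowerSeries R) (n : ℕ) : PowerSeries R :=
  ((n.factorial : ℚ)⁻¹) • (fun u => d⁄dX R u)^[n] (a ^ n * f)

open Finset

set_option linter.unusedSectionVars false

lemma coeff_comp (h s : PowerSeries R) (N : ℕ) :
    coeff N (comp h s) = ∑ k ∈ Finset.range (N + 1), coeff k h * coeff N (s ^ k) :=
  coeff_mk _ _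

lemma X_dvd_self_of_const {s : PowerSeries R} (hs : constantCoeff s = 0) :
    (X : PowerSeries R) ∣ s := by
  rwa [PowerSeries.X_dvd_iff]

lemma coeff_pow_eq_zero {s : PowerSeries R} (hs : constantCoeff s = 0)
    {k N : ℕ} (h : N < k) : coeff N (s ^ k) = 0 := by
  have : (X : PowerSeries R) ^ k ∣ s ^ k := pow_dvd_pow_of_dvd (X_dvd_self_of_const hs) k
  exact (PowerSeries.X_pow_dvd_iff.mp this) N h

lemma coeff_comp_of_le {h s : PowerSeries R} (hs : constantCoeff s = 0)
    {M N : ℕ} (hNM : N < M) :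
    coeff N (comp h s) = ∑ k ∈ Finset.range M, coeff k h * coeff N (s ^ k) := by
  rw [coeff_comp]
  refine Finset.sum_subset (Finset.range_subset_range.2 hNM) ?_
  intro k _ hk
  rw [Finset.mem_range, not_lt] at hk
  rw [coeff_pow_eq_zero hs (lt_of_lt_of_le (Nat.lt_succ_iff.mpr le_rfl) ?_), mul_zero]
  · exact hk

set_option linter.unusedSectionVars false

lemma comp_add (g h s : PowerSeries R) : comp (g + h) s = comp g s + comp h s := by
  ext N
  simp [coeff_comp, add_mul, Finset.sum_add_distrib]

lemma comp_smul {S : Type*} [CommSemiring S] [Module S R] [IsScalarTower S R R] (c : S) (h s : PowerSeries R) :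
    comp (c • h) s = c • comp h s := by
  ext N
  simp [coeff_comp, Finset.smul_sum, smul_mul_assoc]

lemma comp_one (s : PowerSeries R) : comp 1 s = 1 := by
  ext N
  simp [coeff_comp, PowerSeries.coeff_one]

lemma comp_X {s : PowerSeries R} (hs : constantCoeff s = 0) : comp X s = s := by
  ext N
  rw [coeff_comp_of_le hs (Nat.lt_succ_of_lt (Nat.lt_succ_self N))]
  simp only [PowerSeries.coeff_X]
  rw [Finset.sum_eq_single 1]
  · simp
  · intro k _ hk; simp [hk]
  · intro h; exact absurd (by simp) h

lemma constantCoeff_comp (h s : PowerSeries R) :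
    constantCoeff (comp h s) = constantCoeff h := by
  have := coeff_comp h s 0
  simpa using this

lemma aeval_trunc (s h : PowerSeries R) (M : ℕ) :
    Polynomial.aeval s (trunc M h) = ∑ k ∈ Finset.range M, coeff k h • s ^ k := by
  induction M with
  | zero => simp [PowerSeries.trunc_zero']
  | succ M ih =>
      rw [trunc_succ, map_add, ih, Polynomial.aeval_monomial, Finset.sum_range_succ]
      congr 1
      rw [PowerSeries.smul_eq_C_mul]
      rfl

lemma coeff_aeval_trunc (s h : PowerSeries R) (M N : ℕ) :
    coeff N (Polynomial.aeval s (trunc M h)) =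
      ∑ k ∈ Finset.range M, coeff k h * coeff N (s ^ k) := by
  rw [aeval_trunc, map_sum]
  simp [PowerSeries.coeff_smul, smul_eq_mul]

lemma X_pow_dvd_comp_sub_aeval {s : PowerSeries R} (hs : constantCoeff s = 0)
    (h : PowerSeries R) (M : ℕ) :
    (X : PowerSeries R) ^ M ∣ comp h s - Polynomial.aeval s (trunc M h) := by
  rw [PowerSeries.X_pow_dvd_iff]
  intro N hN
  rw [map_sub, coeff_aeval_trunc, coeff_comp_of_le hs hN, sub_self]

lemma comp_mul {s : PowerSeries R} (hs : constantCoeff s = 0) (g h : PowerSeries R) :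
    comp (g * h) s = comp g s * comp h s := by
  ext N
  have key : (X : PowerSeries R) ^ (N + 1) ∣ comp (g * h) s - comp g s * comp h s := by
    have d1 := X_pow_dvd_comp_sub_aeval hs (g * h) (N + 1)
    have d2 := X_pow_dvd_comp_sub_aeval hs g (N + 1)
    have d3 := X_pow_dvd_comp_sub_aeval hs h (N + 1)
    have d4 : (Polynomial.X : Polynomial R) ^ (N + 1) ∣
        trunc (N + 1) g * trunc (N + 1) h - trunc (N + 1) (g * h) := by
      rw [Polynomial.X_pow_dvd_iff]
      intro d hd
      rw [Polynomial.coeff_sub, Polynomial.coeff_mul, coeff_trunc, if_pos hd,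
        PowerSeries.coeff_mul]
      rw [Finset.sum_congr rfl (fun p hp => ?_), sub_self]
      rw [Finset.HasAntidiagonal.mem_antidiagonal] at hp
      rw [coeff_trunc, coeff_trunc, if_pos, if_pos]
      · exact lt_of_le_of_lt (hp ▸ Nat.le_add_left _ _) hd
      · exact lt_of_le_of_lt (hp ▸ Nat.le_add_right _ _) hd
    have d5 : (X : PowerSeries R) ^ (N + 1) ∣
        Polynomial.aeval s (trunc (N + 1) g) * Polynomial.aeval s (trunc (N + 1) h) -
          Polynomial.aeval s (trunc (N + 1) (g * h)) := by
      have := map_dvd (Polynomial.aeval s) d4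
      rw [map_sub, map_mul, map_pow, Polynomial.aeval_X] at this
      exact dvd_trans (pow_dvd_pow_of_dvd (X_dvd_self_of_const hs) (N + 1)) this
    have expand : comp (g * h) s - comp g s * comp h s =
        (comp (g * h) s - Polynomial.aeval s (trunc (N + 1) (g * h)))
        - (Polynomial.aeval s (trunc (N + 1) g) * Polynomial.aeval s (trunc (N + 1) h)
            - Polynomial.aeval s (trunc (N + 1) (g * h)))
        - ((comp g s - Polynomial.aeval s (trunc (N + 1) g)) * comp h s
            + Polynomial.aeval s (trunc (N + 1) g) * (comp h s - Polynomial.aeval s (trunc (N + 1) h))) := by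
      ring
    rw [expand]
    exact dvd_sub (dvd_sub d1 d5) (dvd_add (Dvd.dvd.mul_right d2 _) (Dvd.dvd.mul_left d3 _))
  have := PowerSeries.X_pow_dvd_iff.mp key N (Nat.lt_succ_self N)
  rw [map_sub, sub_eq_zero] at this
  exact this

lemma comp_pow {s : PowerSeries R} (hs : constantCoeff s = 0) (g : PowerSeries R) (m : ℕ) :
    comp (g ^ m) s = comp g s ^ m := by
  induction m with
  | zero => simpa using comp_one s
  | succ m ih => rw [pow_succ, comp_mul hs, ih, pow_succ]

lemma comp_neg (g s : PowerSeries R) : comp (-g) s = - comp g s := by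
  have := comp_smul (R := R) (-1 : R) g s
  simpa using this

lemma comp_sub (g h s : PowerSeries R) : comp (g - h) s = comp g s - comp h s := by
  rw [sub_eq_add_neg, comp_add, comp_neg, sub_eq_add_neg]

lemma X_pow_dvd_derivative {u : PowerSeries R} {M : ℕ} (h : (X : PowerSeries R) ^ (M + 1) ∣ u) :
    (X : PowerSeries R) ^ M ∣ d⁄dX R u := by
  obtain ⟨v, rfl⟩ := h
  rw [Derivation.leibniz, Derivation.leibniz_pow]
  simp only [smul_eq_mul, Nat.add_sub_cancel, derivative_X, nsmul_eq_mul, mul_one]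
  exact dvd_add (Dvd.dvd.mul_right (pow_dvd_pow X (Nat.le_succ M)) _)
    (Dvd.dvd.mul_left (dvd_mul_left _ _) _)

lemma derivative_comp {s : PowerSeries R} (hs : constantCoeff s = 0) (h : PowerSeries R) :
    d⁄dX R (comp h s) = comp (d⁄dX R h) s * d⁄dX R s := by
  ext N
  have key : (X : PowerSeries R) ^ (N + 1) ∣
      d⁄dX R (comp h s) - comp (d⁄dX R h) s * d⁄dX R s := by
    have d1 := X_pow_dvd_comp_sub_aeval hs h (N + 2)
    have dd1 : (X : PowerSeries R) ^ (N + 1) ∣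
        d⁄dX R (comp h s) - d⁄dX R (Polynomial.aeval s (trunc (N + 2) h)) := by
      rw [← map_sub]
      exact X_pow_dvd_derivative d1
    have e : d⁄dX R (Polynomial.aeval s (trunc (N + 2) h)) =
        Polynomial.aeval s (trunc (N + 1) (d⁄dX R h)) * d⁄dX R s := by
      rw [Derivation.map_aeval, smul_eq_mul, trunc_derivative]
    rw [e] at dd1
    have d2 : (X : PowerSeries R) ^ (N + 1) ∣
        (comp (d⁄dX R h) s - Polynomial.aeval s (trunc (N + 1) (d⁄dX R h))) * d⁄dX R s :=
      Dvd.dvd.mul_right (X_pow_dvd_comp_sub_aeval hs (d⁄dX R h) (N + 1)) _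
    have expand : d⁄dX R (comp h s) - comp (d⁄dX R h) s * d⁄dX R s =
        (d⁄dX R (comp h s) - Polynomial.aeval s (trunc (N + 1) (d⁄dX R h)) * d⁄dX R s)
        - (comp (d⁄dX R h) s - Polynomial.aeval s (trunc (N + 1) (d⁄dX R h))) * d⁄dX R s := by
      ring
    rw [expand]
    exact dvd_sub dd1 d2
  have := PowerSeries.X_pow_dvd_iff.mp key N (Nat.lt_succ_self N)
  rw [map_sub, sub_eq_zero] at this
  exact this

section W

variable {a : PowerSeries R} (ha : (X : PowerSeries R) ^ 2 ∣ a)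

lemma coeff_a_zero (ha : (X : PowerSeries R) ^ 2 ∣ a) : coeff 0 a = 0 :=
  PowerSeries.X_pow_dvd_iff.mp ha 0 (by norm_num)

lemma coeff_a_one (ha : (X : PowerSeries R) ^ 2 ∣ a) : coeff 1 a = 0 :=
  PowerSeries.X_pow_dvd_iff.mp ha 1 (by norm_num)

lemma comp_zero (ha : (X : PowerSeries R) ^ 2 ∣ a) : comp a 0 = 0 := by
  ext N
  rw [coeff_comp]
  refine Finset.sum_eq_zero fun k hk => ?_
  match k with
  | 0 => simp [coeff_a_zero ha, ← coeff_zero_eq_constantCoeff_apply]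
  | (k+1) =>
      rw [zero_pow (Nat.succ_ne_zero k), map_zero, mul_zero]

lemma pow_sub_pow_dvd {u v : PowerSeries R} (hu : constantCoeff u = 0)
    (hv : constantCoeff v = 0) {M : ℕ} (hd : (X : PowerSeries R) ^ M ∣ u - v) (k : ℕ) :
    (X : PowerSeries R) ^ (M + k) ∣ u ^ (k + 1) - v ^ (k + 1) := by
  rw [← geom_sum₂_mul, add_comm M k, pow_add]
  refine mul_dvd_mul ?_ hd
  refine Finset.dvd_sum fun i hi => ?_
  rw [Finset.mem_range, Nat.lt_succ_iff] at hi
  have h1 : (X : PowerSeries R) ^ i ∣ u ^ i := pow_dvd_pow_of_dvd (X_dvd_self_of_const hu) i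
  have h2 : (X : PowerSeries R) ^ (k + 1 - 1 - i) ∣ v ^ (k + 1 - 1 - i) :=
    pow_dvd_pow_of_dvd (X_dvd_self_of_const hv) _
  have h3 := mul_dvd_mul h1 h2
  rwa [← pow_add, Nat.succ_sub_one, Nat.add_sub_cancel' hi] at h3

lemma comp_contract (ha : (X : PowerSeries R) ^ 2 ∣ a) {u v : PowerSeries R}
    (hu : constantCoeff u = 0) (hv : constantCoeff v = 0) {M : ℕ}
    (hd : (X : PowerSeries R) ^ M ∣ u - v) :
    (X : PowerSeries R) ^ (M + 1) ∣ comp a u - comp a v := by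
  rw [PowerSeries.X_pow_dvd_iff]
  intro N hN
  rw [map_sub, coeff_comp, coeff_comp, ← Finset.sum_sub_distrib]
  refine Finset.sum_eq_zero fun k _ => ?_
  rw [← mul_sub]
  match k with
  | 0 => simp
  | 1 => rw [coeff_a_one ha, zero_mul]
  | (k+2) =>
      have h1 : (X : PowerSeries R) ^ (M + k + 1) ∣ u ^ (k + 2) - v ^ (k + 2) :=
        pow_sub_pow_dvd hu hv hd (k + 1)
      have h2 : coeff N (u ^ (k + 2) - v ^ (k + 2)) = 0 := by
        refine PowerSeries.X_pow_dvd_iff.mp h1 N ?_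
        omega
      rw [map_sub] at h2
      rw [h2, mul_zero]

def iterW (a : PowerSeries R) : ℕ → PowerSeries R
  | 0 => 0
  | j + 1 => X + comp a (iterW a j)

lemma const_iterW (ha : (X : PowerSeries R) ^ 2 ∣ a) (j : ℕ) :
    constantCoeff (iterW a j) = 0 := by
  cases j with
  | zero => simp [iterW]
  | succ j =>
      rw [iterW, map_add, constantCoeff_comp, constantCoeff_X, zero_add,
        ← coeff_zero_eq_constantCoeff_apply, coeff_a_zero ha]

lemma iterW_step (ha : (X : PowerSeries R) ^ 2 ∣ a) (j : ℕ) :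
    (X : PowerSeries R) ^ (j + 1) ∣ iterW a (j + 1) - iterW a j := by
  induction j with
  | zero =>
      show (X : PowerSeries R) ^ 1 ∣ (X + comp a (iterW a 0)) - iterW a 0
      rw [show iterW a 0 = (0 : PowerSeries R) from rfl, comp_zero ha, add_zero, sub_zero, pow_one]
  | succ j ih =>
      have : iterW a (j + 2) - iterW a (j + 1) = comp a (iterW a (j + 1)) - comp a (iterW a j) := by
        show X + comp a (iterW a (j + 1)) - (X + comp a (iterW a j)) = _
        ring
      rw [this]
      exact comp_contract ha (const_iterW ha (j + 1)) (const_iterW ha j) ih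

lemma iterW_ge (ha : (X : PowerSeries R) ^ 2 ∣ a) {j k : ℕ} (h : j ≤ k) :
    (X : PowerSeries R) ^ (j + 1) ∣ iterW a k - iterW a j := by
  induction k with
  | zero =>
      have : j = 0 := Nat.le_zero.mp h
      subst this; simp
  | succ k ih =>
      rcases Nat.lt_or_ge j (k + 1) with hlt | hge
      · have h1 := ih (Nat.lt_succ_iff.mp hlt)
        have h2 : (X : PowerSeries R) ^ (j + 1) ∣ iterW a (k + 1) - iterW a k :=
          dvd_trans (pow_dvd_pow X (by omega)) (iterW_step ha k)
        have := dvd_add h2 h1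
        rwa [sub_add_sub_cancel] at this
      · have : j = k + 1 := le_antisymm h hge
        subst this; simp

def wser (a : PowerSeries R) : PowerSeries R := PowerSeries.mk fun N => coeff N (iterW a (N + 1))

lemma coeff_wser_eq (ha : (X : PowerSeries R) ^ 2 ∣ a) {N j : ℕ} (h : N < j) :
    coeff N (wser a) = coeff N (iterW a j) := by
  have key : ∀ {j k : ℕ}, j ≤ k → N < j → coeff N (iterW a k) = coeff N (iterW a j) := by
    intro j k hjk hNj
    have := PowerSeries.X_pow_dvd_iff.mp (iterW_ge ha hjk) N (by omega)
    rw [map_sub, sub_eq_zero] at this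
    exact this
  rcases Nat.le_total (N + 1) j with hc | hc
  · rw [show coeff N (wser a) = coeff N (iterW a (N + 1)) from coeff_mk _ _]
    exact (key hc (Nat.lt_succ_self N)).symm
  · rw [show coeff N (wser a) = coeff N (iterW a (N + 1)) from coeff_mk _ _]
    exact key hc h ▸ rfl

lemma wser_dvd (ha : (X : PowerSeries R) ^ 2 ∣ a) (j : ℕ) :
    (X : PowerSeries R) ^ j ∣ wser a - iterW a j := by
  rw [PowerSeries.X_pow_dvd_iff]
  intro N hN
  rw [map_sub, coeff_wser_eq ha hN, sub_self]

lemma const_wser (ha : (X : PowerSeries R) ^ 2 ∣ a) : constantCoeff (wser a) = 0 := by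
  rw [← coeff_zero_eq_constantCoeff_apply, coeff_wser_eq ha (Nat.zero_lt_succ 0),
    coeff_zero_eq_constantCoeff_apply, const_iterW ha]

lemma wser_eq (ha : (X : PowerSeries R) ^ 2 ∣ a) : wser a = X + comp a (wser a) := by
  ext N
  have h1 : coeff N (wser a) = coeff N (iterW a (N + 2)) := coeff_wser_eq ha (by omega)
  have h2 : iterW a (N + 2) = X + comp a (iterW a (N + 1)) := rfl
  have h3 : (X : PowerSeries R) ^ (N + 2) ∣ comp a (wser a) - comp a (iterW a (N + 1)) :=
    comp_contract ha (const_wser ha) (const_iterW ha (N + 1)) (wser_dvd ha (N + 1))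
  have h4 : coeff N (comp a (wser a)) = coeff N (comp a (iterW a (N + 1))) := by
    have := PowerSeries.X_pow_dvd_iff.mp h3 N (by omega)
    rw [map_sub, sub_eq_zero] at this
    exact this
  rw [h1, h2, map_add, map_add, h4]

lemma w_unique (ha : (X : PowerSeries R) ^ 2 ∣ a) {u v : PowerSeries R}
    (hu0 : constantCoeff u = 0) (hu : u = X + comp a u)
    (hv0 : constantCoeff v = 0) (hv : v = X + comp a v) : u = v := by
  have key : ∀ M : ℕ, (X : PowerSeries R) ^ M ∣ u - v := by
    intro M
    induction M with
    | zero => simp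
    | succ M ih =>
        have : u - v = comp a u - comp a v := by
          conv_lhs => rw [hu, hv]
          ring
        rw [this]
        exact comp_contract ha hu0 hv0 ih
    
  ext N
  have := PowerSeries.X_pow_dvd_iff.mp (key (N + 1)) N (Nat.lt_succ_self N)
  rw [map_sub, sub_eq_zero] at this
  exact this

end W

section Lagrange

variable {a : PowerSeries R}

lemma natCast_isUnit (n : ℕ) (h : n ≠ 0) : IsUnit ((n : ℕ) : R) := by
  have h1 : IsUnit ((n : ℚ)) := isUnit_iff_ne_zero.mpr (Nat.cast_ne_zero.mpr h)
  have h2 := h1.map (algebraMap ℚ R)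
  rwa [map_natCast] at h2

lemma coeff_aPow_mul_eq_zero (ha : (X : PowerSeries R) ^ 2 ∣ a) {g : PowerSeries R} {K i n : ℕ}
    (hg : (X : PowerSeries R) ^ K ∣ g) (h : i < 2 * n + K) : coeff i (a ^ n * g) = 0 := by
  have h1 : (X : PowerSeries R) ^ (2 * n + K) ∣ a ^ n * g := by
    rw [pow_add]
    exact mul_dvd_mul (by rw [pow_mul]; exact pow_dvd_pow_of_dvd ha n) hg
  exact PowerSeries.X_pow_dvd_iff.mp h1 i h

def SN (a g : PowerSeries R) (N : ℕ) : R :=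
  ∑ n ∈ Finset.range (N + 1), ((N + n).choose n : R) * coeff (N + n) (a ^ n * g)

lemma SN_extend (ha : (X : PowerSeries R) ^ 2 ∣ a) (g : PowerSeries R) {N K : ℕ} (h : N ≤ K) :
    ∑ n ∈ Finset.range (K + 1), ((N + n).choose n : R) * coeff (N + n) (a ^ n * g)
      = SN a g N := by
  rw [SN]
  refine (Finset.sum_subset (Finset.range_subset_range.2 (by omega)) fun n _ hn => ?_).symm
  rw [Finset.mem_range, not_lt] at hn
  rw [coeff_aPow_mul_eq_zero ha (dvd_refl _ |>.trans (by rw [pow_zero]; exact one_dvd g)) (by omega), mul_zero]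

lemma SN_step_term (ha : (X : PowerSeries R) ^ 2 ∣ a) (p k : ℕ) :
    ((p + k).choose k : R) * coeff (p + k) (a ^ k * d⁄dX R a)
      = ((p + k + 1).choose (k + 1) : R) * coeff (p + k + 1) (a ^ (k + 1)) := by
  have hu : IsUnit ((k + 1 : ℕ) : R) := natCast_isUnit (k + 1) (Nat.succ_ne_zero k)
  apply hu.mul_left_cancel
  have hder : (d⁄dX R) (a ^ (k + 1)) = (k + 1) • (a ^ k * d⁄dX R a) := by
    rw [Derivation.leibniz_pow]
    simp only [Nat.add_sub_cancel, smul_eq_mul]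
  have hco : ((k + 1 : ℕ) : R) * coeff (p + k) (a ^ k * d⁄dX R a)
      = coeff (p + k + 1) (a ^ (k + 1)) * ((p + k + 1 : ℕ) : R) := by
    have h1 := coeff_derivative (a ^ (k + 1)) (p + k)
    rw [hder, map_nsmul, nsmul_eq_mul] at h1
    push_cast at h1 ⊢
    linear_combination h1
  have hnat : ((p + k + 1) * (p + k).choose k : ℕ) = ((p + k + 1).choose (k + 1) * (k + 1) : ℕ) :=
    Nat.add_one_mul_choose_eq (p + k) k
  have hnatR : ((p + k + 1 : ℕ) : R) * ((p + k).choose k : R)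
      = ((p + k + 1).choose (k + 1) : R) * ((k + 1 : ℕ) : R) := by
    exact_mod_cast congrArg (Nat.cast : ℕ → R) hnat
  linear_combination (((p + k).choose k : R)) * hco + coeff (p + k + 1) (a ^ (k + 1)) * hnatR

lemma SN_base (ha : (X : PowerSeries R) ^ 2 ∣ a) (p : ℕ) :
    SN a (1 - d⁄dX R a) p = if p = 0 then 1 else 0 := by
  have hterm : ∀ k, ((p + k).choose k : R) * coeff (p + k) (a ^ k * (1 - d⁄dX R a))
      = ((p + k).choose k : R) * coeff (p + k) (a ^ k)
        - ((p + k + 1).choose (k + 1) : R) * coeff (p + k + 1) (a ^ (k + 1)) := by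
    intro k
    rw [mul_sub, mul_one, map_sub, mul_sub, SN_step_term ha]
  have hsum : SN a (1 - d⁄dX R a) p
      = ∑ k ∈ Finset.range (p + 1),
          ((fun k => ((p + k).choose k : R) * coeff (p + k) (a ^ k)) k
            - (fun k => ((p + k).choose k : R) * coeff (p + k) (a ^ k)) (k + 1)) := by
    rw [SN]
    refine Finset.sum_congr rfl fun k _ => ?_
    rw [hterm k]
    rfl
  rw [hsum, Finset.sum_range_sub']
  show ((p + 0).choose 0 : R) * coeff (p + 0) (a ^ 0)
      - ((p + (p + 1)).choose (p + 1) : R) * coeff (p + (p + 1)) (a ^ (p + 1)) = _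
  have h2 : coeff (p + (p + 1)) (a ^ (p + 1)) = 0 := by
    have := coeff_aPow_mul_eq_zero ha (g := (1 : PowerSeries R)) (K := 0) (n := p + 1)
      (i := p + (p + 1)) (by simp) (by omega)
    rwa [mul_one] at this
  simp [h2, PowerSeries.coeff_one, eq_comm]

lemma SN_rec (ha : (X : PowerSeries R) ^ 2 ∣ a) (g : PowerSeries R) (N : ℕ) :
    SN a ((X - a) * g) (N + 1) = SN a g N := by
  set E : ℕ → R := fun n => coeff (N + n) (a ^ n * g) with hE
  have hX0 : (X : PowerSeries R) ^ 0 ∣ g := by rw [pow_zero]; exact one_dvd g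
  have hEvanish : ∀ n, N < n → E n = 0 := fun n hn =>
    coeff_aPow_mul_eq_zero ha (K := 0) hX0 (by omega)
  have hterm : ∀ n, coeff (N + 1 + n) (a ^ n * ((X - a) * g)) = E n - E (n + 1) := by
    intro n
    have e : a ^ n * ((X - a) * g) = X * (a ^ n * g) - a ^ (n + 1) * g := by ring
    rw [e, map_sub, hE]
    congr 1
    · have h := coeff_succ_X_mul (N + n) (a ^ n * g)
      rw [show N + n + 1 = N + 1 + n by omega] at h
      exact h
    · rw [show N + 1 + n = N + (n + 1) by omega]
  set G : ℕ → R := fun n =>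
    if n = 0 then 0 else ((N + 1 + (n - 1)).choose (n - 1) : R) * E n with hG
  have h1 : SN a ((X - a) * g) (N + 1)
      = (∑ n ∈ Finset.range (N + 2), ((N + 1 + n).choose n : R) * E n)
        - ∑ n ∈ Finset.range (N + 2), ((N + 1 + n).choose n : R) * E (n + 1) := by
    rw [SN, ← Finset.sum_sub_distrib]
    exact Finset.sum_congr rfl fun n _ => by rw [hterm n]; ring
  have h3 : ∑ n ∈ Finset.range (N + 2), ((N + 1 + n).choose n : R) * E (n + 1)
      = ∑ n ∈ Finset.range (N + 3), G n := by
    rw [Finset.sum_range_succ' G (N + 2)]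
    simp only [hG, Nat.succ_sub_one, Nat.succ_ne_zero, if_false, if_pos rfl, add_zero]
  have h4 : ∑ n ∈ Finset.range (N + 3), ((N + 1 + n).choose n : R) * E n
      = ∑ n ∈ Finset.range (N + 2), ((N + 1 + n).choose n : R) * E n := by
    rw [Finset.sum_range_succ, hEvanish (N + 2) (by omega), mul_zero, add_zero]
  have h5 : ∑ n ∈ Finset.range (N + 3), (((N + 1 + n).choose n : R) * E n - G n)
      = ∑ n ∈ Finset.range (N + 3), ((N + n).choose n : R) * E n := by
    refine Finset.sum_congr rfl fun n _ => ?_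
    match n with
    | 0 => simp [hG]
    | (m + 1) =>
        have e1 : ((N + 1 + (m + 1)).choose (m + 1) : R)
            = ((N + 1 + m).choose m : R) + ((N + (m + 1)).choose (m + 1) : R) := by
          have h := Nat.choose_succ_succ' (N + m + 1) m
          rw [show N + 1 + (m + 1) = N + m + 1 + 1 by omega,
            show N + (m + 1) = N + m + 1 by omega, show N + 1 + m = N + m + 1 by omega, h]
          push_cast
          ring
        have e2 : G (m + 1) = ((N + 1 + m).choose m : R) * E (m + 1) := by
          simp [hG]
        rw [e1, e2]
        ring
  rw [h1, h3, ← h4, ← Finset.sum_sub_distrib, h5]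
  exact SN_extend ha g (by omega)

lemma SN_basis (ha : (X : PowerSeries R) ^ 2 ∣ a) :
    ∀ m N : ℕ, m ≤ N → SN a ((X - a) ^ m * (1 - d⁄dX R a)) N = if m = N then 1 else 0 := by
  intro m
  induction m with
  | zero =>
      intro N _
      rw [pow_zero, one_mul, SN_base ha]
      simp [eq_comm]
  | succ m ih =>
      intro N hmN
      obtain ⟨N', rfl⟩ : ∃ N', N = N' + 1 := ⟨N - 1, by omega⟩
      have e : (X - a) ^ (m + 1) * (1 - d⁄dX R a)
          = (X - a) * ((X - a) ^ m * (1 - d⁄dX R a)) := by ring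
      rw [e, SN_rec ha, ih N' (by omega)]
      simp [Nat.succ_inj]

lemma choose_factorial_succ (N n : ℕ) :
    (N + (n + 1)).choose (n + 1) * (n + 1).factorial
      = (N + 1 + n).choose n * n.factorial * (N + 1) := by
  have hpos : 0 < N.factorial := Nat.factorial_pos N
  apply Nat.eq_of_mul_eq_mul_right hpos
  have h1 : (N + (n + 1)).choose (n + 1) * (n + 1).factorial * N.factorial
      = (N + (n + 1)).factorial := by
    have := Nat.choose_mul_factorial_mul_factorial
      (show n + 1 ≤ N + (n + 1) by omega)
    rwa [show N + (n + 1) - (n + 1) = N by omega] at this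
  have h2 : (N + 1 + n).choose n * n.factorial * (N + 1) * N.factorial
      = (N + 1 + n).factorial := by
    have := Nat.choose_mul_factorial_mul_factorial (show n ≤ N + 1 + n by omega)
    rw [show N + 1 + n - n = N + 1 by omega] at this
    rw [← this, Nat.factorial_succ]
    ring
  rw [h1, h2, show N + (n + 1) = N + 1 + n by omega]

lemma coeff_derivative_iterate (u : PowerSeries R) (n : ℕ) :
    ∀ N : ℕ, coeff N ((fun v => d⁄dX R v)^[n] u)
      = (((N + n).choose n * n.factorial : ℕ) : R) * coeff (N + n) u := by
  induction n with
  | zero => intro N; simp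
  | succ n ih =>
      intro N
      rw [Function.iterate_succ_apply', coeff_derivative, ih (N + 1)]
      have e1 : ((N + (n + 1)).choose (n + 1) * (n + 1).factorial : ℕ)
          = ((N + 1 + n).choose n * n.factorial * (N + 1) : ℕ) := choose_factorial_succ N n
      rw [show N + 1 + n = N + (n + 1) by omega] at e1
      rw [e1]
      push_cast
      ring

lemma coeff_lagrangeTerm (a f : PowerSeries R) (n N : ℕ) :
    coeff N (lagrangeTerm a f n) = ((N + n).choose n : R) * coeff (N + n) (a ^ n * f) := by
  rw [lagrangeTerm, PowerSeries.coeff_smul, coeff_derivative_iterate]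
  rw [Algebra.smul_def]
  push_cast
  have hn : ((n.factorial : ℕ) : R) = algebraMap ℚ R ((n.factorial : ℕ) : ℚ) :=
    (map_natCast (algebraMap ℚ R) _).symm
  rw [hn]
  have hfac : algebraMap ℚ R (((n.factorial : ℕ) : ℚ))⁻¹
      * algebraMap ℚ R ((n.factorial : ℕ) : ℚ) = 1 := by
    rw [← map_mul, inv_mul_cancel₀ (by exact_mod_cast Nat.factorial_ne_zero n), map_one]
  linear_combination (((N + n).choose n : R) * coeff (N + n) (a ^ n * f)) * hfac

lemma X_dvd_sub_a (ha : (X : PowerSeries R) ^ 2 ∣ a) : (X : PowerSeries R) ∣ (X - a) :=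
  dvd_sub dvd_rfl (dvd_trans (dvd_pow_self X two_ne_zero) ha)

lemma const_sub_a (ha : (X : PowerSeries R) ^ 2 ∣ a) :
    constantCoeff (X - a) = 0 := by
  rw [map_sub, constantCoeff_X, ← coeff_zero_eq_constantCoeff_apply, coeff_a_zero ha, sub_zero]

lemma coeff_basis_lt (ha : (X : PowerSeries R) ^ 2 ∣ a) {i m : ℕ} (h : i < m) :
    coeff i ((X - a) ^ m * (1 - d⁄dX R a)) = 0 := by
  have hd : (X : PowerSeries R) ^ m ∣ (X - a) ^ m * (1 - d⁄dX R a) :=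
    Dvd.dvd.mul_right (pow_dvd_pow_of_dvd (X_dvd_sub_a ha) m) _
  exact PowerSeries.X_pow_dvd_iff.mp hd i h

lemma pow_sub_X_pow_dvd (ha : (X : PowerSeries R) ^ 2 ∣ a) (m : ℕ) :
    (X : PowerSeries R) ^ (m + 1) ∣ ((X - a) ^ m - X ^ m) := by
  cases m with
  | zero => simp
  | succ k =>
      have h2 : (X : PowerSeries R) ^ 2 ∣ (X - a) - X := by
        rw [sub_sub_cancel_left]
        exact (dvd_neg).mpr ha
      have := pow_sub_pow_dvd (const_sub_a ha) constantCoeff_X h2 k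
      exact dvd_trans (pow_dvd_pow X (by omega)) this

lemma coeff_basis_self (ha : (X : PowerSeries R) ^ 2 ∣ a) (m : ℕ) :
    coeff m ((X - a) ^ m * (1 - d⁄dX R a)) = 1 := by
  have e : (X - a) ^ m * (1 - d⁄dX R a)
      = X ^ m * (1 - d⁄dX R a) + ((X - a) ^ m - X ^ m) * (1 - d⁄dX R a) := by ring
  rw [e, map_add]
  have h1 : coeff m (((X - a) ^ m - X ^ m) * (1 - d⁄dX R a)) = 0 := by
    have hd : (X : PowerSeries R) ^ (m + 1) ∣ ((X - a) ^ m - X ^ m) * (1 - d⁄dX R a) :=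
      Dvd.dvd.mul_right (pow_sub_X_pow_dvd ha m) _
    exact PowerSeries.X_pow_dvd_iff.mp hd m (Nat.lt_succ_self m)
  rw [h1, add_zero]
  have h2 : coeff m (X ^ m * (1 - d⁄dX R a)) = coeff 0 (1 - d⁄dX R a) := by
    have := coeff_X_pow_mul (1 - d⁄dX R a) m 0
    rwa [zero_add] at this
  rw [h2, map_sub]
  have h3 : coeff 0 (d⁄dX R a) = 0 := by
    rw [coeff_derivative, coeff_a_one ha, zero_mul]
  rw [h3, sub_zero]
  simp

def compHom (s : PowerSeries R) : PowerSeries R →ₗ[R] PowerSeries R where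
  toFun h := comp h s
  map_add' g h := comp_add g h s
  map_smul' c h := comp_smul c h s

lemma SN_add' (a u v : PowerSeries R) (N : ℕ) : SN a (u + v) N = SN a u N + SN a v N := by
  rw [SN, SN, SN, ← Finset.sum_add_distrib]
  refine Finset.sum_congr rfl fun n _ => ?_
  rw [mul_add, map_add, mul_add]

lemma SN_smul' (a u : PowerSeries R) (c : R) (N : ℕ) : SN a (c • u) N = c * SN a u N := by
  rw [SN, SN, Finset.mul_sum]
  refine Finset.sum_congr rfl fun n _ => ?_
  rw [mul_smul_comm, PowerSeries.coeff_smul, smul_eq_mul]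
  ring

def SNhom (a : PowerSeries R) (N : ℕ) : PowerSeries R →ₗ[R] R where
  toFun g := SN a g N
  map_add' u v := SN_add' a u v N
  map_smul' c u := SN_smul' a u c N

lemma SN_highOrder (ha : (X : PowerSeries R) ^ 2 ∣ a) {ρ : PowerSeries R} {N : ℕ}
    (hρ : (X : PowerSeries R) ^ (N + 1) ∣ ρ) : SN a ρ N = 0 := by
  rw [SN]
  refine Finset.sum_eq_zero fun n _ => ?_
  rw [coeff_aPow_mul_eq_zero ha hρ (by omega), mul_zero]

lemma comp_highOrder (ρ w : PowerSeries R) {N : ℕ}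
    (hρ : (X : PowerSeries R) ^ (N + 1) ∣ ρ) :
    (X : PowerSeries R) ^ (N + 1) ∣ comp ρ w := by
  rw [PowerSeries.X_pow_dvd_iff]
  intro i hi
  rw [coeff_comp]
  refine Finset.sum_eq_zero fun k hk => ?_
  rw [Finset.mem_range] at hk
  rw [PowerSeries.X_pow_dvd_iff.mp hρ k (by omega), zero_mul]

def Pseq (a f : PowerSeries R) : ℕ → PowerSeries R
  | 0 => f
  | m + 1 => Pseq a f m - coeff m (Pseq a f m) • ((X - a) ^ m * (1 - d⁄dX R a))

lemma Pseq_coeff_lt (ha : (X : PowerSeries R) ^ 2 ∣ a) (f : PowerSeries R) :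
    ∀ m, ∀ i < m, coeff i (Pseq a f m) = 0 := by
  intro m
  induction m with
  | zero => intro i hi; omega
  | succ m ih =>
      intro i hi
      show coeff i (Pseq a f m - coeff m (Pseq a f m) • ((X - a) ^ m * (1 - d⁄dX R a))) = 0
      rw [map_sub, PowerSeries.coeff_smul, smul_eq_mul]
      rcases Nat.lt_or_ge i m with hlt | hge
      · rw [ih i hlt, coeff_basis_lt ha hlt, mul_zero, sub_zero]
      · have : i = m := by omega
        subst this
        rw [coeff_basis_self ha, mul_one, sub_self]

lemma Pseq_decomp (a f : PowerSeries R) (m : ℕ) :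
    f = Pseq a f m
      + ∑ k ∈ Finset.range m, coeff k (Pseq a f k) • ((X - a) ^ k * (1 - d⁄dX R a)) := by
  induction m with
  | zero => simp [Pseq]
  | succ m ih =>
      rw [Finset.sum_range_succ]
      have e : Pseq a f (m + 1)
          = Pseq a f m - coeff m (Pseq a f m) • ((X - a) ^ m * (1 - d⁄dX R a)) := rfl
      rw [e]
      conv_lhs => rw [ih]
      abel

end Lagrange

/-- **formal Lagrange inversion.** Let `R` be a commutative `ℚ`-algebra,
`a ∈ x²·R[[x]]` and `f ∈ R[[x]]`. There is a unique power series `w` with zero constant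
term satisfying `w = x + a∘w`; moreover the `n`-th term `(1/n!)(d/dx)^n(a^n f)` of the
Lagrange series has order `≥ n` (so the series converges `x`-adically, its sum being the
coefficientwise stabilized limit), and its sum equals `(f∘w)·(1 − a′∘w)^{-1}`, where
`1 − a′∘w` has constant term `1` and hence is a unit (with inverse `Ring.inverse`). -/
theorem statement2 (a f : PowerSeries R) (ha : (X : PowerSeries R) ^ 2 ∣ a) :
    (∃! w : PowerSeries R, constantCoeff w = 0 ∧ w = X + comp a w) ∧
    ∀ w : PowerSeries R, constantCoeff w = 0 → w = X + comp a w →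
      (∀ n N : ℕ, N < n → coeff N (lagrangeTerm a f n) = 0) ∧
      constantCoeff (1 - comp (d⁄dX R a) w) = 1 ∧
      (PowerSeries.mk fun N => ∑ n ∈ Finset.range (N + 1), coeff N (lagrangeTerm a f n)) =
        comp f w * Ring.inverse (1 - comp (d⁄dX R a) w) := by
  constructor
  · exact ⟨wser a, ⟨const_wser ha, wser_eq ha⟩,
      fun v hv => w_unique ha hv.1 hv.2 (const_wser ha) (wser_eq ha)⟩
  intro w hw0 hweq
  have hf0 : (X : PowerSeries R) ^ 0 ∣ f := by rw [pow_zero]; exact one_dvd f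
  -- derivative of the functional equation
  have hdw : d⁄dX R w = 1 + comp (d⁄dX R a) w * d⁄dX R w := by
    conv_lhs => rw [hweq]
    rw [map_add, derivative_X, derivative_comp hw0]
  have hunit_eq : (1 - comp (d⁄dX R a) w) * d⁄dX R w = 1 := by
    linear_combination hdw
  have hisunit : IsUnit (1 - comp (d⁄dX R a) w) := IsUnit.of_mul_eq_one _ hunit_eq
  have hinv : Ring.inverse (1 - comp (d⁄dX R a) w) = d⁄dX R w := by
    have h1 := Ring.inverse_mul_cancel _ hisunit
    calc Ring.inverse (1 - comp (d⁄dX R a) w)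
        = Ring.inverse (1 - comp (d⁄dX R a) w) * ((1 - comp (d⁄dX R a) w) * d⁄dX R w) := by
          rw [hunit_eq, mul_one]
      _ = (Ring.inverse (1 - comp (d⁄dX R a) w) * (1 - comp (d⁄dX R a) w)) * d⁄dX R w := by ring
      _ = d⁄dX R w := by rw [h1, one_mul]
  have hconst : constantCoeff (1 - comp (d⁄dX R a) w) = 1 := by
    rw [map_sub, constantCoeff_comp, map_one]
    have h3 : constantCoeff (d⁄dX R a) = 0 := by
      rw [← coeff_zero_eq_constantCoeff_apply, coeff_derivative, coeff_a_one ha, zero_mul]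
    rw [h3, sub_zero]
  refine ⟨?_, hconst, ?_⟩
  · intro n N hNn
    rw [coeff_lagrangeTerm, coeff_aPow_mul_eq_zero ha hf0 (by omega), mul_zero]
  -- the main identity
  rw [hinv]
  ext N
  rw [coeff_mk]
  have hL : ∑ n ∈ Finset.range (N + 1), coeff N (lagrangeTerm a f n) = SN a f N := by
    rw [SN]
    exact Finset.sum_congr rfl fun n _ => coeff_lagrangeTerm a f n N
  rw [hL]
  -- the decomposition of f along the basis (X-a)^k (1 - a')
  have hdecomp := Pseq_decomp a f (N + 1)
  have hρ : (X : PowerSeries R) ^ (N + 1) ∣ Pseq a f (N + 1) := by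
    rw [PowerSeries.X_pow_dvd_iff]
    exact fun i hi => Pseq_coeff_lt ha f (N + 1) i hi
  set r : ℕ → R := fun k => coeff k (Pseq a f k) with hr
  have SN_sum : ∀ (s : Finset ℕ) (g : ℕ → PowerSeries R),
      SN a (∑ k ∈ s, g k) N = ∑ k ∈ s, SN a (g k) N := fun s g => map_sum (SNhom a N) g s
  have comp_sum : ∀ (s : Finset ℕ) (g : ℕ → PowerSeries R),
      comp (∑ k ∈ s, g k) w = ∑ k ∈ s, comp (g k) w := fun s g => map_sum (compHom w) g s
  -- compute the SN side
  have hSN : SN a f N = r N := by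
    conv_lhs => rw [hdecomp]
    rw [SN_add', SN_sum, SN_highOrder ha hρ, zero_add]
    have hterm : ∀ k ∈ Finset.range (N + 1),
        SN a (r k • ((X - a) ^ k * (1 - d⁄dX R a))) N = if k = N then r k else 0 := by
      intro k hk
      rw [Finset.mem_range] at hk
      rw [SN_smul', SN_basis ha k N (by omega)]
      by_cases h : k = N <;> simp [h]
    rw [Finset.sum_congr rfl hterm, Finset.sum_ite_eq' (Finset.range (N + 1)) N r,
      if_pos (Finset.mem_range.mpr (Nat.lt_succ_self N))]
  -- compute the composition side
  have hcompbasis : ∀ k, comp ((X - a) ^ k * (1 - d⁄dX R a)) w * d⁄dX R w = X ^ k := by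
    intro k
    have hXa : comp (X - a) w = X := by
      rw [comp_sub, comp_X hw0]
      exact sub_eq_iff_eq_add.mpr hweq
    rw [comp_mul hw0, comp_pow hw0, hXa, comp_sub, comp_one, mul_assoc, hunit_eq, mul_one]
  have hRHS : coeff N (comp f w * d⁄dX R w) = r N := by
    conv_lhs => rw [hdecomp]
    rw [comp_add, comp_sum, add_mul, map_add]
    have hzero : coeff N (comp (Pseq a f (N + 1)) w * d⁄dX R w) = 0 := by
      have hd := Dvd.dvd.mul_right (comp_highOrder _ w hρ) (d⁄dX R w)
      exact PowerSeries.X_pow_dvd_iff.mp hd N (Nat.lt_succ_self N)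
    rw [hzero, zero_add, Finset.sum_mul, map_sum]
    have hterm : ∀ k ∈ Finset.range (N + 1),
        coeff N (comp (r k • ((X - a) ^ k * (1 - d⁄dX R a))) w * d⁄dX R w)
          = if k = N then r k else 0 := by
      intro k hk
      rw [comp_smul, smul_mul_assoc, PowerSeries.coeff_smul, hcompbasis k, smul_eq_mul,
        PowerSeries.coeff_X_pow]
      by_cases h : k = N
      · simp [h]
      · simp only [h, if_false]
        rw [if_neg (fun hNk => h hNk.symm), mul_zero]
    rw [Finset.sum_congr rfl hterm, Finset.sum_ite_eq' (Finset.range (N + 1)) N r,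
      if_pos (Finset.mem_range.mpr (Nat.lt_succ_self N))]
  rw [hSN, hRHS]

end Formal
end
end

section
/- Let V be a ℚ-vector space equipped with a symmetric bilinear form (·,·), and write α² := (α,α). Fix rational numbers s ≠ 0, r and c₂, and elements c₁, ℓ ∈ V. Set M := ℓ − (r/s)·c₁, and define c₂(v) := M²/2 + 2r + (M,c₁)/s + (r/s)·(c₁²/2 − c₂), vd(c) := 2s·c₂ − (s−1)·c₁² − 2(s²−1), and vd(v) := 2r·c₂(v) − (r−1)·M² − 2(r²−1). Then vd(v) = ℓ² + 2 − (r²/s²)·(vd(c) − 2). -/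
/-- Let `V` be a `ℚ`-vector space with a symmetric bilinear form `(·,·)`,
write `α² := (α,α)`. Fix rationals `s ≠ 0`, `r`, `c₂` and `c₁, ℓ ∈ V`.
Set `M := ℓ − (r/s)·c₁`, `c₂(v) := M²/2 + 2r + (M,c₁)/s + (r/s)(c₁²/2 − c₂)`,
`vd(c) := 2s c₂ − (s−1) c₁² − 2(s²−1)` and `vd(v) := 2r c₂(v) − (r−1) M² − 2(r²−1)`.
Then `vd(v) = ℓ² + 2 − (r²/s²)(vd(c) − 2)`. -/
theorem statement12 {V : Type*} [AddCommGroup V] [Module ℚ V]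
    (B : LinearMap.BilinForm ℚ V) (hB : ∀ x y : V, B x y = B y x)
    (s r c₂ : ℚ) (hs : s ≠ 0) (c₁ ℓ : V) :
    let M : V := ℓ - (r / s) • c₁
    let c₂v : ℚ := B M M / 2 + 2 * r + B M c₁ / s + (r / s) * (B c₁ c₁ / 2 - c₂)
    let vdc : ℚ := 2 * s * c₂ - (s - 1) * B c₁ c₁ - 2 * (s ^ 2 - 1)
    let vdv : ℚ := 2 * r * c₂v - (r - 1) * B M M - 2 * (r ^ 2 - 1)
    vdv = B ℓ ℓ + 2 - (r ^ 2 / s ^ 2) * (vdc - 2) := by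
  intro M c₂v vdc vdv
  have hsym := hB c₁ ℓ
  simp only [vdv, c₂v, vdc, M, map_sub, map_smul, LinearMap.sub_apply,
    LinearMap.smul_apply, smul_eq_mul]
  field_simp
  ring_nf
  rw [hsym]
  ring
end
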